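/- Let T be a complex n×n matrix with ‖T‖ ≤ 1 (operator norm). Then for every complex polynomial p in one variable, ‖p(T)‖ ≤ sup_{|z|=1} |p(z)| (von Neumann's inequality for matrices). -/

import Mathlib

open scoped Matrix.Norms.L2Operator ENNReal NNReal ComplexOrder
open Polynomial Matrix

variable {ι : Type*} [Fintype ι] [DecidableEq ι]

lemma isStarNormal_aeval {A : Type*} [Ring A] [StarRing A] [Algebra ℂ A] [StarModule ℂ A]
    (u : A) (hu : Commute u (star u)) (p : ℂ[X]) : IsStarNormal (aeval u p) := by
  constructor
  rw [Polynomial.aeval_eq_sum_range (p := p) u]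
  rw [star_sum]
  refine Commute.sum_left _ _ _ fun i _ => Commute.sum_right _ _ _ fun j _ => ?_
  simp only [star_smul, star_pow]
  exact ((hu.symm.pow_pow i j).smul_left _).smul_right _

lemma unitary_aeval_norm_le [Nonempty ι] (U : Matrix ι ι ℂ) (hU : U ∈ unitary (Matrix ι ι ℂ))
    (p : ℂ[X]) (M : ℝ) (hM0 : 0 ≤ M) (hM : ∀ z : ℂ, ‖z‖ = 1 → ‖p.eval z‖ ≤ M) :
    ‖(aeval U p : Matrix ι ι ℂ)‖ ≤ M := by
  letI : CStarAlgebra (Matrix ι ι ℂ) := { }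
  rw [Unitary.mem_iff] at hU
  have hcomm : Commute U (star U) := hU.2.trans hU.1.symm
  have hnorm : IsStarNormal (aeval U p) := isStarNormal_aeval U hcomm p
  have h1 : spectralRadius ℂ (aeval U p) = ‖(aeval U p : Matrix ι ι ℂ)‖₊ :=
    IsStarNormal.spectralRadius_eq_nnnorm _
  have hne : (spectrum ℂ U).Nonempty := spectrum.nonempty_of_isAlgClosed_of_finiteDimensional ℂ U
  have hmap := spectrum.map_polynomial_aeval_of_nonempty U p hne
  have h2 : spectralRadius ℂ (aeval U p) ≤ ENNReal.ofReal M := by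
    rw [spectralRadius]
    refine iSup₂_le fun k hk => ?_
    rw [hmap] at hk
    obtain ⟨z, hz, rfl⟩ := hk
    have hz1 : ‖z‖ = 1 := by
      have := spectrum.subset_circle_of_unitary (Unitary.mem_iff.mpr hU) hz
      simpa [Metric.mem_sphere, dist_zero_right] using this
    calc (‖p.eval z‖₊ : ℝ≥0∞) = ENNReal.ofReal ‖p.eval z‖ := (ofReal_norm _).symm
    _ ≤ ENNReal.ofReal M := ENNReal.ofReal_le_ofReal (hM z hz1)
  rw [h1] at h2
  refine (ENNReal.ofReal_le_ofReal_iff hM0).mp ?_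
  rwa [ofReal_norm]

variable {κ ι : Type*} [Fintype κ] [DecidableEq κ] [Fintype ι] [DecidableEq ι]

lemma norm_block_le (P : Matrix κ κ (Matrix ι ι ℂ)) (i₀ : κ) :
    ‖P i₀ i₀‖ ≤ ‖Matrix.compAlgEquiv κ ι ℂ ℂ P‖ := by
  set Q := Matrix.compAlgEquiv κ ι ℂ ℂ P with hQ
  rw [Matrix.cstar_norm_def, Matrix.cstar_norm_def]
  refine ContinuousLinearMap.opNorm_le_bound _ (norm_nonneg _) fun x => ?_
  -- x : EuclideanSpace ℂ ι
  set x' : EuclideanSpace ℂ (κ × ι) :=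
    (WithLp.equiv _ _).symm (fun q : κ × ι => if q.1 = i₀ then x q.2 else 0) with hx'
  have hxnorm : ‖x'‖ = ‖x‖ := by
    rw [EuclideanSpace.norm_eq, EuclideanSpace.norm_eq]
    congr 1
    rw [Fintype.sum_prod_type]
    rw [Finset.sum_eq_single i₀]
    · simp [x', WithLp.equiv_symm_apply, PiLp.toLp_apply]
    · intro b _ hb; simp [x', WithLp.equiv_symm_apply, PiLp.toLp_apply, hb]
    · simp
  have happ : ∀ a : ι, (toEuclideanCLM (𝕜 := ℂ) Q x') (i₀, a)
      = (toEuclideanCLM (𝕜 := ℂ) (P i₀ i₀) ((WithLp.equiv _ _).symm fun a => x a)) a := by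
    intro a
    simp only [x', WithLp.equiv_symm_apply, toEuclideanCLM_toLp, WithLp.ofLp_toLp, PiLp.toLp_apply, toLin'_apply,
      mulVec, dotProduct]
    rw [Fintype.sum_prod_type]
    rw [Finset.sum_eq_single i₀]
    · simp [Q, Matrix.compAlgEquiv_apply, mulVec, dotProduct]
    · intro b _ hb; simp [hb]
    · simp
  have hxeq : ((WithLp.equiv 2 (ι → ℂ)).symm fun a => x a) = x := rfl
  rw [hxeq] at happ
  have key : ‖toEuclideanCLM (𝕜 := ℂ) (P i₀ i₀) x‖ ≤ ‖toEuclideanCLM (𝕜 := ℂ) Q x'‖ := by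
    rw [EuclideanSpace.norm_eq, EuclideanSpace.norm_eq]
    apply Real.sqrt_le_sqrt
    rw [Fintype.sum_prod_type]
    calc (∑ a, ‖toEuclideanCLM (𝕜 := ℂ) (P i₀ i₀) x a‖ ^ 2)
        = ∑ a, ‖toEuclideanCLM (𝕜 := ℂ) Q x' (i₀, a)‖ ^ 2 := by simp_rw [happ]
      _ ≤ ∑ i, ∑ a, ‖toEuclideanCLM (𝕜 := ℂ) Q x' (i, a)‖ ^ 2 := by
          refine Finset.single_le_sum (f := fun i => ∑ a, ‖toEuclideanCLM (𝕜 := ℂ) Q x' (i, a)‖ ^ 2) ?_ (Finset.mem_univ i₀)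
          intro i _
          positivity
  calc ‖toEuclideanCLM (𝕜 := ℂ) (P i₀ i₀) x‖ ≤ ‖toEuclideanCLM (𝕜 := ℂ) Q x'‖ := key
    _ ≤ ‖toEuclideanCLM (𝕜 := ℂ) Q‖ * ‖x'‖ := ContinuousLinearMap.le_opNorm _ _
    _ = ‖toEuclideanCLM (𝕜 := ℂ) Q‖ * ‖x‖ := by rw [hxnorm]

variable {ι : Type*} [Fintype ι] [DecidableEq ι]

lemma posSemidef_one_sub_star_mul_self (T : Matrix ι ι ℂ) (hT : ‖T‖ ≤ 1) :
    (1 - Tᴴ * T).PosSemidef := by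
  rw [posSemidef_iff_dotProduct_mulVec]
  constructor
  · simp [Matrix.IsHermitian, Matrix.conjTranspose_sub, Matrix.conjTranspose_mul]
  · intro x
    have h₁ : star x ⬝ᵥ ((1 - Tᴴ * T) *ᵥ x)
        = star x ⬝ᵥ x - star (T *ᵥ x) ⬝ᵥ (T *ᵥ x) := by
      rw [Matrix.sub_mulVec, dotProduct_sub, Matrix.one_mulVec, ← Matrix.mulVec_mulVec,
        Matrix.dotProduct_mulVec, ← Matrix.star_mulVec]
    have hdot : ∀ v : ι → ℂ, star v ⬝ᵥ v
        = ((‖(WithLp.equiv 2 (ι → ℂ)).symm v‖ ^ 2 : ℝ) : ℂ) := by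
      intro v
      rw [WithLp.equiv_symm_apply, dotProduct_comm, ← EuclideanSpace.inner_toLp_toLp (𝕜 := ℂ), inner_self_eq_norm_sq_to_K]
      norm_cast
    have h3 : ‖(WithLp.equiv 2 (ι → ℂ)).symm (T *ᵥ x)‖ ≤ ‖(WithLp.equiv 2 (ι → ℂ)).symm x‖ := by
      have h := (toEuclideanCLM (𝕜 := ℂ) T).le_opNorm ((WithLp.equiv 2 (ι → ℂ)).symm x)
      refine h.trans ?_
      have h1' : ‖toEuclideanCLM (𝕜 := ℂ) T‖ ≤ 1 := hT
      nlinarith [norm_nonneg ((WithLp.equiv 2 (ι → ℂ)).symm x)]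
    rw [h₁, hdot, hdot, ← Complex.ofReal_sub]
    rw [Complex.zero_le_real]
    have := pow_le_pow_left₀ (norm_nonneg _) h3 2
    linarith

lemma aeval_unitary_conj (V D : Matrix ι ι ℂ) (hV : V * star V = 1) (hV' : star V * V = 1)
    (q : ℂ[X]) : aeval (V * D * star V) q = V * aeval D q * star V := by
  have hpow : ∀ k : ℕ, (V * D * star V) ^ k = V * D ^ k * star V := by
    intro k
    induction k with
    | zero => simp [hV]
    | succ k ih =>
        rw [pow_succ, ih, pow_succ]
        calc V * D ^ k * star V * (V * D * star V)
            = V * D ^ k * (star V * V) * D * star V := by noncomm_ring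
          _ = V * (D ^ k * D) * star V := by rw [hV']; noncomm_ring
  induction q using Polynomial.induction_on' with
  | add f g hf hg => rw [map_add, map_add, hf, hg]; noncomm_ring
  | monomial k c =>
      rw [aeval_monomial, aeval_monomial, hpow, Algebra.algebraMap_eq_smul_one]
      simp only [smul_mul_assoc, one_mul, mul_smul_comm]
lemma aeval_diagonal (g : ι → ℂ) (q : ℂ[X]) :
    aeval (Matrix.diagonal g) q = Matrix.diagonal (fun i => q.eval (g i)) := by
  induction q using Polynomial.induction_on' with
  | add f g hf hg => rw [map_add, hf, hg, Matrix.diagonal_add]; simp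
  | monomial k c =>
      rw [aeval_monomial]
      simp [Matrix.diagonal_pow, Matrix.algebraMap_eq_diagonal, Matrix.diagonal_mul_diagonal]

noncomputable def Matrix.PosSemidef.sqrt {A : Matrix ι ι ℂ} (hA : A.PosSemidef) :
    Matrix ι ι ℂ :=
  hA.1.eigenvectorUnitary.1 * diagonal (RCLike.ofReal ∘ Real.sqrt ∘ hA.1.eigenvalues : ι → ℂ) *
    star hA.1.eigenvectorUnitary.1

lemma Matrix.PosSemidef.sqrt_mul_self {A : Matrix ι ι ℂ} (hA : A.PosSemidef) :
    hA.sqrt * hA.sqrt = A := by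
  have hV' : star (hA.1.eigenvectorUnitary.1) * hA.1.eigenvectorUnitary.1 = 1 :=
    Matrix.mem_unitaryGroup_iff'.mp hA.1.eigenvectorUnitary.2
  have hspec : A = hA.1.eigenvectorUnitary.1 * diagonal (RCLike.ofReal ∘ hA.1.eigenvalues) *
      star hA.1.eigenvectorUnitary.1 := by
    have h := hA.1.spectral_theorem; rwa [Unitary.conjStarAlgAut_apply] at h
  conv_rhs => rw [hspec]
  unfold Matrix.PosSemidef.sqrt
  rw [show ∀ a b c d e f : Matrix ι ι ℂ, a * b * c * (d * e * f) = a * b * (c * d) * e * f from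
    fun _ _ _ _ _ _ => by noncomm_ring, hV', mul_one, mul_assoc _ (diagonal _) (diagonal _),
    diagonal_mul_diagonal]
  congr 1; congr 1; congr 1
  funext i
  simp only [Function.comp_apply, ← RCLike.ofReal_mul, Real.mul_self_sqrt (hA.eigenvalues_nonneg i)]

lemma Matrix.PosSemidef.posSemidef_sqrt {A : Matrix ι ι ℂ} (hA : A.PosSemidef) :
    hA.sqrt.PosSemidef :=
  (PosSemidef.diagonal (fun i => by
    simpa using Complex.zero_le_real.mpr (Real.sqrt_nonneg (hA.1.eigenvalues i)))).mul_mul_conjTranspose_same _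

lemma sqrt_eq_aeval {A : Matrix ι ι ℂ} (hA : A.PosSemidef) (q : ℂ[X])
    (hq : ∀ i, q.eval ((hA.1.eigenvalues i : ℝ) : ℂ) = ((Real.sqrt (hA.1.eigenvalues i) : ℝ) : ℂ)) :
    hA.sqrt = aeval A q := by
  set V : Matrix ι ι ℂ := hA.1.eigenvectorUnitary.1 with hVdef
  have hV : V * star V = 1 := Matrix.mem_unitaryGroup_iff.mp hA.1.eigenvectorUnitary.2
  have hV' : star V * V = 1 := Matrix.mem_unitaryGroup_iff'.mp hA.1.eigenvectorUnitary.2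
  have hspec : A = V * diagonal (RCLike.ofReal ∘ hA.1.eigenvalues) * star V :=
    by have h := hA.1.spectral_theorem; rwa [Unitary.conjStarAlgAut_apply] at h
  rw [Matrix.PosSemidef.sqrt]
  conv_rhs => rw [hspec]
  rw [aeval_unitary_conj _ _ hV hV', aeval_diagonal]
  have heq : (RCLike.ofReal ∘ Real.sqrt ∘ hA.1.eigenvalues : ι → ℂ)
      = fun i => q.eval ((hA.1.eigenvalues i : ℝ) : ℂ) := by
    funext i
    exact (hq i).symm
  rw [heq]
  rfl

lemma exists_defects (T : Matrix ι ι ℂ) (hT : ‖T‖ ≤ 1) :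
    ∃ D D' : Matrix ι ι ℂ, Dᴴ = D ∧ D'ᴴ = D' ∧ D * D = 1 - Tᴴ * T ∧ D' * D' = 1 - T * Tᴴ
      ∧ T * D = D' * T := by
  have hTs : ‖Tᴴ‖ ≤ 1 := by
    rw [Matrix.l2_opNorm_conjTranspose]
    exact hT
  have hA₁ : (1 - Tᴴ * T).PosSemidef := posSemidef_one_sub_star_mul_self T hT
  have hA₂ : (1 - T * Tᴴ).PosSemidef := by
    have := posSemidef_one_sub_star_mul_self Tᴴ hTs
    rwa [conjTranspose_conjTranspose] at this
  set e₁ := hA₁.1.eigenvalues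
  set e₂ := hA₂.1.eigenvalues
  set s : Finset ℂ := (Finset.univ.image fun i => ((e₁ i : ℝ) : ℂ))
      ∪ (Finset.univ.image fun i => ((e₂ i : ℝ) : ℂ)) with hs
  set f : ℂ → ℂ := fun z => ((Real.sqrt z.re : ℝ) : ℂ) with hf
  set q := Lagrange.interpolate s id f with hqdef
  have hq : ∀ z ∈ s, q.eval z = f z := fun z hz =>
    Lagrange.eval_interpolate_at_node f (Set.injOn_id _) hz
  have hq₁ : ∀ i, q.eval ((e₁ i : ℝ) : ℂ) = ((Real.sqrt (e₁ i) : ℝ) : ℂ) := by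
    intro i
    rw [hq _ (Finset.mem_union_left _ (Finset.mem_image_of_mem _ (Finset.mem_univ i)))]
    simp [hf]
  have hq₂ : ∀ i, q.eval ((e₂ i : ℝ) : ℂ) = ((Real.sqrt (e₂ i) : ℝ) : ℂ) := by
    intro i
    rw [hq _ (Finset.mem_union_right _ (Finset.mem_image_of_mem _ (Finset.mem_univ i)))]
    simp [hf]
  refine ⟨hA₁.sqrt, hA₂.sqrt, hA₁.posSemidef_sqrt.1, hA₂.posSemidef_sqrt.1,
    hA₁.sqrt_mul_self, hA₂.sqrt_mul_self, ?_⟩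
  rw [sqrt_eq_aeval hA₁ q hq₁, sqrt_eq_aeval hA₂ q hq₂]
  have h0 : SemiconjBy T (1 - Tᴴ * T) (1 - T * Tᴴ) := by
    unfold SemiconjBy
    noncomm_ring
  rw [Polynomial.aeval_eq_sum_range (p := q) (1 - Tᴴ * T),
    Polynomial.aeval_eq_sum_range (p := q) (1 - T * Tᴴ), Finset.mul_sum, Finset.sum_mul]
  refine Finset.sum_congr rfl fun i _ => ?_
  rw [mul_smul_comm, smul_mul_assoc, (h0.pow_right i).eq]

section Dilation
variable {R : Type*} [Ring R] [StarRing R]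

variable (T D D' : R) (d : ℕ)

def dilW : Matrix (Fin (d+1)) (Fin (d+1)) R :=
  Matrix.of fun i j =>
    if (j : ℕ) = 0 then (if (i : ℕ) = 0 then T else if (i : ℕ) = 1 then D else 0)
    else if (j : ℕ) = d then (if (i : ℕ) = 0 then D' else if (i : ℕ) = 1 then -(star T) else 0)
    else if (i : ℕ) = (j : ℕ) + 1 then 1 else 0

variable {d} in
lemma dilW_col0 (i j : Fin (d+1)) (hj : (j:ℕ) = 0) :
    dilW T D D' d i j = if (i : ℕ) = 0 then T else if (i : ℕ) = 1 then D else 0 := by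
  show (if (j : ℕ) = 0 then _ else _) = _
  rw [if_pos hj]

variable {d} in
lemma dilW_cold (i j : Fin (d+1)) (hj0 : ¬ (j:ℕ) = 0) (hjd : (j:ℕ) = d) :
    dilW T D D' d i j = if (i : ℕ) = 0 then D' else if (i : ℕ) = 1 then -(star T) else 0 := by
  show (if (j : ℕ) = 0 then _ else _) = _
  rw [if_neg hj0, if_pos hjd]

variable {d} in
lemma dilW_mid (i j : Fin (d+1)) (hj0 : ¬ (j:ℕ) = 0) (hjd : ¬ (j:ℕ) = d) :
    dilW T D D' d i j = if (i : ℕ) = (j : ℕ) + 1 then 1 else 0 := by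
  show (if (j : ℕ) = 0 then _ else _) = _
  rw [if_neg hj0, if_neg hjd]

lemma fin_sum_one {M : Type*} [AddCommMonoid M] {N : ℕ} (F : Fin N → M) (a : Fin N)
    (h : ∀ j, j ≠ a → F j = 0) : ∑ j, F j = F a :=
  Finset.sum_eq_single_of_mem a (Finset.mem_univ a) (fun b _ hb => h b hb)

lemma fin_sum_two {M : Type*} [AddCommMonoid M] {N : ℕ} (F : Fin N → M) (a b : Fin N)
    (hab : a ≠ b) (h : ∀ j, j ≠ a → j ≠ b → F j = 0) : ∑ j, F j = F a + F b := by
  classical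
  rw [← Finset.sum_subset (Finset.subset_univ ({a, b} : Finset (Fin N)))
    (fun x _ hx => by
      simp only [Finset.mem_insert, Finset.mem_singleton, not_or] at hx
      exact h x hx.1 hx.2)]
  rw [Finset.sum_pair hab]

variable {T D D'} (hd : 1 ≤ d)
  (hDs : star D = D) (hD's : star D' = D')
  (hDD : D * D = 1 - star T * T) (hDD' : D' * D' = 1 - T * star T)
  (hint : T * D = D' * T)

include hd hDs hD's hDD hDD' hint in
lemma dilW_unitary : star (dilW T D D' d) * dilW T D D' d = 1 := by
  have hd0 : ¬ (d = 0) := by omega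
  have hint' : D * star T = star T * D' := by
    have h := congrArg star hint
    rwa [StarMul.star_mul, StarMul.star_mul, hDs, hD's] at h
  ext i k
  rw [Matrix.mul_apply, Matrix.one_apply]
  simp only [Matrix.star_apply]
  obtain ⟨z, hz⟩ : ∃ z : Fin (d+1), (z:ℕ) = 0 := ⟨⟨0, by omega⟩, rfl⟩
  obtain ⟨o, ho⟩ : ∃ o : Fin (d+1), (o:ℕ) = 1 := ⟨⟨1, by omega⟩, rfl⟩
  have ho0 : ¬ (o:ℕ) = 0 := by omega
  have hzo : z ≠ o := fun h => by rw [h] at hz; omega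
  by_cases hi0 : (i : ℕ) = 0
  · rw [fin_sum_two _ z o hzo (fun j hj0 hj1 => by
      have hj0' : ¬ (j : ℕ) = 0 := fun h => hj0 (Fin.ext (h.trans hz.symm))
      have hj1' : ¬ (j : ℕ) = 1 := fun h => hj1 (Fin.ext (h.trans ho.symm))
      rw [dilW_col0 _ _ _ _ _ hi0, if_neg hj0', if_neg hj1', star_zero, zero_mul])]
    rw [dilW_col0 _ _ _ z i hi0, if_pos hz, dilW_col0 _ _ _ o i hi0, if_neg ho0, if_pos ho]
    by_cases hk0 : (k : ℕ) = 0
    · rw [dilW_col0 _ _ _ z k hk0, if_pos hz, dilW_col0 _ _ _ o k hk0, if_neg ho0, if_pos ho]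
      rw [if_pos (Fin.ext (by omega) : i = k), hDs, hDD]
      abel
    · by_cases hkd : (k : ℕ) = d
      · rw [dilW_cold _ _ _ z k hk0 hkd, if_pos hz,
          dilW_cold _ _ _ o k hk0 hkd, if_neg ho0, if_pos ho]
        rw [if_neg (fun h : i = k => by rw [h] at hi0; omega), hDs, mul_neg, hint']
        abel
      · rw [dilW_mid _ _ _ z k hk0 hkd, dilW_mid _ _ _ o k hk0 hkd,
          if_neg (show ¬ (z:ℕ) = (k:ℕ)+1 by omega),
          if_neg (show ¬ (o:ℕ) = (k:ℕ)+1 by omega),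
          if_neg (fun h : i = k => by rw [h] at hi0; omega)]
        simp
  · by_cases hid : (i : ℕ) = d
    · rw [fin_sum_two _ z o hzo (fun j hj0 hj1 => by
        have hj0' : ¬ (j : ℕ) = 0 := fun h => hj0 (Fin.ext (h.trans hz.symm))
        have hj1' : ¬ (j : ℕ) = 1 := fun h => hj1 (Fin.ext (h.trans ho.symm))
        rw [dilW_cold _ _ _ _ _ hi0 hid, if_neg hj0', if_neg hj1', star_zero, zero_mul])]
      rw [dilW_cold _ _ _ z i hi0 hid, if_pos hz,
        dilW_cold _ _ _ o i hi0 hid, if_neg ho0, if_pos ho]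
      by_cases hk0 : (k : ℕ) = 0
      · rw [dilW_col0 _ _ _ z k hk0, if_pos hz, dilW_col0 _ _ _ o k hk0, if_neg ho0, if_pos ho]
        rw [if_neg (fun h : i = k => by rw [h] at hid; omega), hD's, star_neg, star_star,
          neg_mul, hint]
        abel
      · by_cases hkd : (k : ℕ) = d
        · rw [dilW_cold _ _ _ z k hk0 hkd, if_pos hz,
            dilW_cold _ _ _ o k hk0 hkd, if_neg ho0, if_pos ho]
          rw [if_pos (Fin.ext (by omega) : i = k), hD's, star_neg, star_star, hDD']
          noncomm_ring
        · rw [dilW_mid _ _ _ z k hk0 hkd, dilW_mid _ _ _ o k hk0 hkd,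
            if_neg (show ¬ (z:ℕ) = (k:ℕ)+1 by omega),
            if_neg (show ¬ (o:ℕ) = (k:ℕ)+1 by omega),
            if_neg (fun h : i = k => by rw [h] at hid; omega)]
          simp
    · obtain ⟨s, hs⟩ : ∃ s : Fin (d+1), (s:ℕ) = (i:ℕ) + 1 := ⟨⟨(i:ℕ)+1, by omega⟩, rfl⟩
      rw [fin_sum_one _ s (fun j hj => by
        have hj' : ¬ (j : ℕ) = (i:ℕ) + 1 := fun h => hj (Fin.ext (h.trans hs.symm))
        rw [dilW_mid _ _ _ _ _ hi0 hid, if_neg hj', star_zero, zero_mul])]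
      rw [dilW_mid _ _ _ s i hi0 hid, if_pos hs, star_one, one_mul]
      by_cases hk0 : (k : ℕ) = 0
      · rw [dilW_col0 _ _ _ s k hk0,
          if_neg (show ¬ (s:ℕ) = 0 by omega), if_neg (show ¬ (s:ℕ) = 1 by omega),
          if_neg (fun h : i = k => by rw [h] at hi0; omega)]
      · by_cases hkd : (k : ℕ) = d
        · rw [dilW_cold _ _ _ s k hk0 hkd,
            if_neg (show ¬ (s:ℕ) = 0 by omega), if_neg (show ¬ (s:ℕ) = 1 by omega),
            if_neg (fun h : i = k => by rw [h] at hid; omega)]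
        · rw [dilW_mid _ _ _ s k hk0 hkd]
          by_cases hik : i = k
          · rw [if_pos (by rw [hs, hik]), if_pos hik]
          · rw [if_neg (fun h : (s:ℕ) = (k:ℕ) + 1 => hik (Fin.ext (by omega))), if_neg hik]
lemma dilW_pow (hd : 1 ≤ d) (z : Fin (d+1)) (hz : (z:ℕ) = 0) :
    ∀ k, 1 ≤ k → k ≤ d → ∀ j : Fin (d+1),
    (dilW T D D' d ^ k) j z
      = if (j:ℕ) = 0 then T ^ k else if (j:ℕ) ≤ k then D * T ^ (k - (j:ℕ)) else 0 := by
  intro k hk1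
  induction k, hk1 using Nat.le_induction with
  | base =>
      intro _ j
      rw [pow_one, dilW_col0 T D D' j z hz, pow_one]
      by_cases hj0 : (j:ℕ) = 0
      · rw [if_pos hj0, if_pos hj0]
      · rw [if_neg hj0, if_neg hj0]
        by_cases hj1 : (j:ℕ) = 1
        · rw [if_pos hj1, if_pos (by omega), hj1]
          norm_num
        · rw [if_neg hj1, if_neg (by omega)]
  | succ k hk1 ih =>
      intro hkd j
      have hkd' : k ≤ d := by omega
      have ihs := ih hkd'
      obtain ⟨dd, hdd⟩ : ∃ dd : Fin (d+1), (dd:ℕ) = d := ⟨⟨d, by omega⟩, rfl⟩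
      have hzdd : z ≠ dd := fun h => by rw [h] at hz; omega
      rw [pow_succ', Matrix.mul_apply]
      have hWkdd : (dilW T D D' d ^ k) dd z = 0 := by
        rw [ihs dd, if_neg (by omega), if_neg (by omega)]
      by_cases hj0 : (j:ℕ) = 0
      · rw [fin_sum_two _ z dd hzdd (fun m hm0 hmd => by
          have hm0' : ¬ (m:ℕ) = 0 := fun h => hm0 (Fin.ext (by omega))
          have hmd' : ¬ (m:ℕ) = d := fun h => hmd (Fin.ext (by omega))
          rw [dilW_mid T D D' j m hm0' hmd', if_neg (by omega : ¬ (j:ℕ) = (m:ℕ)+1), zero_mul])]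
        rw [hWkdd, mul_zero, add_zero, dilW_col0 T D D' j z hz, if_pos hj0,
          ihs z, if_pos hz, if_pos hj0, ← pow_succ']
      · by_cases hj1 : (j:ℕ) = 1
        · rw [fin_sum_two _ z dd hzdd (fun m hm0 hmd => by
            have hm0' : ¬ (m:ℕ) = 0 := fun h => hm0 (Fin.ext (by omega))
            have hmd' : ¬ (m:ℕ) = d := fun h => hmd (Fin.ext (by omega))
            rw [dilW_mid T D D' j m hm0' hmd', if_neg (by omega : ¬ (j:ℕ) = (m:ℕ)+1), zero_mul])]
          rw [hWkdd, mul_zero, add_zero, dilW_col0 T D D' j z hz, if_neg hj0, if_pos hj1,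
            ihs z, if_pos hz, if_neg hj0, if_pos (by omega), hj1]
          norm_num
        · obtain ⟨s, hs⟩ : ∃ s : Fin (d+1), (s:ℕ) = (j:ℕ) - 1 :=
            ⟨⟨(j:ℕ) - 1, by omega⟩, rfl⟩
          have hs0 : ¬ (s:ℕ) = 0 := by omega
          have hsd : ¬ (s:ℕ) = d := by have := j.isLt; omega
          rw [fin_sum_one _ s (fun m hm => by
            have hm' : ¬ (m:ℕ) = (j:ℕ) - 1 := fun h => hm (Fin.ext (by omega))
            by_cases hm0 : (m:ℕ) = 0
            · rw [dilW_col0 T D D' j m hm0, if_neg hj0, if_neg hj1, zero_mul]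
            · by_cases hmd : (m:ℕ) = d
              · have hmdd : m = dd := Fin.ext (by omega)
                rw [hmdd, hWkdd, mul_zero]
              · rw [dilW_mid T D D' j m hm0 hmd, if_neg (by omega : ¬ (j:ℕ) = (m:ℕ)+1),
                  zero_mul])]
          rw [dilW_mid T D D' j s hs0 hsd, if_pos (by omega : (j:ℕ) = (s:ℕ)+1), one_mul,
            ihs s, if_neg hs0, if_neg hj0]
          by_cases hjk : (j:ℕ) ≤ k + 1
          · rw [if_pos (show (s:ℕ) ≤ k by omega), if_pos hjk,
              show k - (s:ℕ) = k + 1 - (j:ℕ) from by omega]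
          · rw [if_neg (by omega : ¬ (s:ℕ) ≤ k), if_neg hjk]

end Dilation


section Assembly
variable {κ ι : Type*} [Fintype κ] [DecidableEq κ] [Fintype ι] [DecidableEq ι]

lemma compAlgEquiv_star (W : Matrix κ κ (Matrix ι ι ℂ)) :
    Matrix.compAlgEquiv κ ι ℂ ℂ (star W) = star (Matrix.compAlgEquiv κ ι ℂ ℂ W) := by
  ext ⟨i, a⟩ ⟨j, b⟩
  simp [Matrix.compAlgEquiv_apply, Matrix.star_apply]

lemma aeval_dilW_entry (T D D' : Matrix ι ι ℂ) (p : ℂ[X]) {d : ℕ} (hdeg : p.natDegree < d)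
    (z : Fin (d+1)) (hz : (z:ℕ) = 0) :
    (aeval (dilW T D D' d) p) z z = aeval T p := by
  rw [Polynomial.aeval_eq_sum_range (p := p) (dilW T D D' d),
    Polynomial.aeval_eq_sum_range (p := p) T, Matrix.sum_apply]
  refine Finset.sum_congr rfl fun i hi => ?_
  rw [Matrix.smul_apply]
  congr 1
  rcases Nat.eq_zero_or_pos i with h0 | h1
  · subst h0
    rw [pow_zero, pow_zero, Matrix.one_apply_eq]
  · have hid : i ≤ d := by
      have := Finset.mem_range.mp hi
      omega
    rw [dilW_pow (T := T) (D := D) (D' := D') (d := d) (by omega) z hz i h1 hid z, if_pos hz]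

theorem von_neumann_one_general [Nonempty ι] (T : Matrix ι ι ℂ) (hT : ‖T‖ ≤ 1)
    (p : ℂ[X]) (M : ℝ) (hM0 : 0 ≤ M) (hM : ∀ w : ℂ, ‖w‖ = 1 → ‖p.eval w‖ ≤ M) :
    ‖(aeval T p : Matrix ι ι ℂ)‖ ≤ M := by
  obtain ⟨D, D', hDs, hD's, hDD, hDD', hint⟩ := exists_defects T hT
  set d : ℕ := p.natDegree + 1 with hd
  have hd1 : 1 ≤ d := by omega
  set W : Matrix (Fin (d+1)) (Fin (d+1)) (Matrix ι ι ℂ) := dilW T D D' d with hW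
  have hDs' : star D = D := hDs
  have hD's' : star D' = D' := hD's
  have hDD2 : D * D = 1 - star T * T := hDD
  have hDD'2 : D' * D' = 1 - T * star T := hDD'
  have hUW : star W * W = 1 := dilW_unitary d hd1 hDs' hD's' hDD2 hDD'2 hint
  set U : Matrix (Fin (d+1) × ι) (Fin (d+1) × ι) ℂ := Matrix.compAlgEquiv _ _ ℂ ℂ W with hU
  have hUstar : star U * U = 1 := by
    rw [hU, ← compAlgEquiv_star, ← _root_.map_mul, hUW, _root_.map_one]
  have hUunit : U ∈ unitary (Matrix (Fin (d+1) × ι) (Fin (d+1) × ι) ℂ) :=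
    Unitary.mem_iff.mpr ⟨hUstar, mul_eq_one_comm.mp hUstar⟩
  have hz : ((⟨0, by omega⟩ : Fin (d+1)) : ℕ) = 0 := rfl
  have hentry : (aeval W p) ⟨0, by omega⟩ ⟨0, by omega⟩ = aeval T p :=
    aeval_dilW_entry T D D' p (by omega) _ hz
  calc ‖(aeval T p : Matrix ι ι ℂ)‖
      = ‖(aeval W p) ⟨0, by omega⟩ ⟨0, by omega⟩‖ := by rw [hentry]
    _ ≤ ‖Matrix.compAlgEquiv _ _ ℂ ℂ (aeval W p)‖ := norm_block_le _ _
    _ = ‖(aeval U p : Matrix (Fin (d+1) × ι) (Fin (d+1) × ι) ℂ)‖ := by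
        rw [hU, Polynomial.aeval_algHom_apply (Matrix.compAlgEquiv (Fin (d+1)) ι ℂ ℂ) W p]
    _ ≤ M := unitary_aeval_norm_le U hUunit p M hM0 hM

end Assembly

/-- The operator norm of a matrix acting on Euclidean space `ℂ^n`. -/
noncomputable def opNorm {n : ℕ} (T : Matrix (Fin n) (Fin n) ℂ) : ℝ :=
  ‖(Matrix.toEuclideanCLM (𝕜 := ℂ) T :
      EuclideanSpace ℂ (Fin n) →L[ℂ] EuclideanSpace ℂ (Fin n))‖

/-- von Neumann's inequality for a single contractive matrix. -/
theorem von_neumann_one_matrix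
    (n : ℕ) (T : Matrix (Fin n) (Fin n) ℂ) (hT : opNorm T ≤ 1)
    (p : Polynomial ℂ) :
    opNorm (Polynomial.aeval T p) ≤
      sSup {x : ℝ | ∃ z : ℂ, ‖z‖ = 1 ∧ x = ‖p.eval z‖} := by
  set S : Set ℝ := {x : ℝ | ∃ z : ℂ, ‖z‖ = 1 ∧ x = ‖p.eval z‖} with hS
  have hSim : S = (fun z : ℂ => ‖p.eval z‖) '' (Metric.sphere (0:ℂ) 1) := by
    ext x
    constructor
    · rintro ⟨z, hz, rfl⟩
      exact ⟨z, by simpa [mem_sphere_zero_iff_norm] using hz, rfl⟩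
    · rintro ⟨z, hz, rfl⟩
      exact ⟨z, by simpa [mem_sphere_zero_iff_norm] using hz, rfl⟩
  have hbdd : BddAbove S := by
    rw [hSim]
    exact ((isCompact_sphere (0:ℂ) 1).image (by fun_prop)).bddAbove
  have hM : ∀ w : ℂ, ‖w‖ = 1 → ‖p.eval w‖ ≤ sSup S :=
    fun w hw => le_csSup hbdd ⟨w, hw, rfl⟩
  have hM0 : 0 ≤ sSup S := (norm_nonneg _).trans (hM 1 (by norm_num))
  rcases Nat.eq_zero_or_pos n with hn | hn
  · subst hn
    have h0 : (Matrix.toEuclideanCLM (𝕜 := ℂ) (aeval T p) :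
        EuclideanSpace ℂ (Fin 0) →L[ℂ] EuclideanSpace ℂ (Fin 0)) = 0 := Subsingleton.elim _ _
    show ‖(Matrix.toEuclideanCLM (𝕜 := ℂ) (aeval T p) :
        EuclideanSpace ℂ (Fin 0) →L[ℂ] EuclideanSpace ℂ (Fin 0))‖ ≤ sSup S
    rw [h0, norm_zero]
    exact hM0
  · haveI : Nonempty (Fin n) := ⟨⟨0, hn⟩⟩
    exact von_neumann_one_general T hT p (sSup S) hM0 hM
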